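/- (Bayesian backward method.) (i) The total mass of the unnormalized posterior equals the backward integral at time 0: ∫_{E^{T+1}} U(x₀,…,x_T) dμ^{⊗(T+1)} = ∫_E b₀(x₀)·u₀(x₀) μ(dx₀). (ii) For every point (x₀,…,x_T) ∈ E^{T+1} such that 0 < b_{t−1}(x_{t−1}) < ∞ for all 1 ≤ t ≤ T, the unnormalized posterior admits the forward Markov factorization U(x₀,…,x_T) = b₀(x₀)·u₀(x₀) · ∏_{t=1}^{T} [ b_t(x_t)·u_t(x_{t−1},x_t) / b_{t−1}(x_{t−1}) ]. (iii) For every 1 ≤ t ≤ T and every x ∈ E with 0 < b_{t−1}(x) < ∞, the forward factor is a probability density: ∫_E b_t(y)·u_t(x,y) / b_{t−1}(x) μ(dy) = 1. -/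

import Mathlib

open MeasureTheory ENNReal
open scoped ENNReal BigOperators
open Fin.NatCast

private lemma telescope_aux (c d : ℕ → ℝ≥0∞) :
    ∀ T : ℕ, (∀ t, 1 ≤ t → t ≤ T → 0 < c (t - 1) ∧ c (t - 1) < ∞) →
      c 0 * ∏ t ∈ Finset.Icc 1 T, (c t * d t / c (t - 1))
        = c T * ∏ t ∈ Finset.Icc 1 T, d t := by
  intro T
  induction T with
  | zero => simp
  | succ n ih =>
    intro h
    rw [Finset.prod_Icc_succ_top (Nat.le_add_left 1 n),
        Finset.prod_Icc_succ_top (Nat.le_add_left 1 n)]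
    simp only [Nat.add_sub_cancel]
    rw [← mul_assoc, ih (fun t h1 h2 => h t h1 (h2.trans (Nat.le_succ n)))]
    obtain ⟨hp, hf⟩ := h (n + 1) (Nat.le_add_left 1 n) le_rfl
    simp only [Nat.add_sub_cancel] at hp hf
    have key : c n * (c (n + 1) * d (n + 1) / c n) = c (n + 1) * d (n + 1) :=
      ENNReal.mul_div_cancel hp.ne' hf.ne
    calc (c n * ∏ t ∈ Finset.Icc 1 n, d t) * (c (n + 1) * d (n + 1) / c n)
        = (c n * (c (n + 1) * d (n + 1) / c n)) * ∏ t ∈ Finset.Icc 1 n, d t := by ring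
      _ = c (n + 1) * ((∏ t ∈ Finset.Icc 1 n, d t) * d (n + 1)) := by rw [key]; ring

theorem bayesian_backward_method
    {E : Type*} [MeasurableSpace E] (μ : Measure E) [SigmaFinite μ] (T : ℕ)
    (u₀ : E → ℝ≥0∞) (hu₀ : Measurable u₀)
    (u : ℕ → E × E → ℝ≥0∞) (hu : ∀ t, Measurable (u t))
    (b : ℕ → E → ℝ≥0∞)
    (hbT : ∀ x, b T x = 1)
    (hbrec : ∀ t, 1 ≤ t → t ≤ T → ∀ x, b (t - 1) x = ∫⁻ y, b t y * u t (x, y) ∂μ) :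
    -- (i)
    ((∫⁻ x : Fin (T + 1) → E,
        u₀ (x 0) * ∏ t ∈ Finset.Icc 1 T, u t (x ↑(t - 1), x ↑t)
        ∂(Measure.pi fun _ : Fin (T + 1) => μ))
      = ∫⁻ x₀, b 0 x₀ * u₀ x₀ ∂μ)
    -- (ii)
    ∧ (∀ x : Fin (T + 1) → E,
        (∀ t, 1 ≤ t → t ≤ T → 0 < b (t - 1) (x ↑(t - 1)) ∧ b (t - 1) (x ↑(t - 1)) < ∞) →
        u₀ (x 0) * ∏ t ∈ Finset.Icc 1 T, u t (x ↑(t - 1), x ↑t)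
          = b 0 (x 0) * u₀ (x 0) *
            ∏ t ∈ Finset.Icc 1 T,
              b t (x ↑t) * u t (x ↑(t - 1), x ↑t) / b (t - 1) (x ↑(t - 1)))
    -- (iii)
    ∧ (∀ t, 1 ≤ t → t ≤ T → ∀ x : E, 0 < b (t - 1) x → b (t - 1) x < ∞ →
        (∫⁻ y, b t y * u t (x, y) / b (t - 1) x ∂μ) = 1) := by
  -- measurability of the backward functions
  have hbm' : ∀ k, k ≤ T → Measurable (b (T - k)) := by
    intro k
    induction k with
    | zero =>
      intro _
      have : b (T - 0) = fun _ => (1 : ℝ≥0∞) := by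
        funext x; simpa using hbT x
      rw [this]; exact measurable_const
    | succ k ih =>
      intro hk
      have hrw : b (T - (k + 1)) = fun x => ∫⁻ y, b (T - k) y * u (T - k) (x, y) ∂μ := by
        funext x
        have := hbrec (T - k) (by omega) (by omega) x
        rwa [show T - k - 1 = T - (k + 1) by omega] at this
      rw [hrw]
      apply Measurable.lintegral_prod_right
      exact ((ih (by omega)).comp measurable_snd).mul ((hu (T - k)).comp measurable_id)
  have hbm : ∀ n, n ≤ T → Measurable (b n) := by
    intro n hn
    have := hbm' (T - n) (by omega)
    rwa [show T - (T - n) = n by omega] at this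
  -- the key backward induction for (i)
  have key : ∀ n, n ≤ T →
      (∫⁻ x : Fin (n + 1) → E,
          (u₀ (x 0) * ∏ t ∈ Finset.Icc 1 n, u t (x ↑(t - 1), x ↑t)) * b n (x (Fin.last n))
          ∂(Measure.pi fun _ : Fin (n + 1) => μ))
        = ∫⁻ x₀, b 0 x₀ * u₀ x₀ ∂μ := by
    intro n
    induction n with
    | zero =>
      intro _
      have h := (measurePreserving_funUnique μ (Fin 1)).lintegral_comp
        (f := fun y => b 0 y * u₀ y) ((hbm 0 (Nat.zero_le T)).mul hu₀)
      rw [← h]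
      apply lintegral_congr
      intro x
      simp [mul_comm]
    | succ n ih =>
      intro hn
      have hnT : n ≤ T := by omega
      -- decompose the last coordinate
      have hmp := (measurePreserving_piFinSuccAbove (fun _ : Fin (n + 2) => μ)
        (Fin.last (n + 1))).symm
      set F : (Fin (n + 2) → E) → ℝ≥0∞ := fun x =>
        (u₀ (x 0) * ∏ t ∈ Finset.Icc 1 (n + 1), u t (x ↑(t - 1), x ↑t)) *
          b (n + 1) (x (Fin.last (n + 1))) with hF
      have hFm : Measurable F := by
        apply Measurable.mul
        · apply Measurable.mul
          · exact hu₀.comp (measurable_pi_apply 0)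
          · apply Finset.measurable_prod
            intro t _
            exact (hu t).comp ((measurable_pi_apply _).prodMk (measurable_pi_apply _))
        · exact (hbm (n + 1) hn).comp (measurable_pi_apply _)
      have step1 : (∫⁻ x : Fin (n + 2) → E, F x ∂(Measure.pi fun _ : Fin (n + 2) => μ))
          = ∫⁻ p : E × (Fin (n + 1) → E), F (Fin.snoc p.2 p.1)
              ∂(μ.prod (Measure.pi fun _ : Fin (n + 1) => μ)) := by
        rw [← hmp.lintegral_comp hFm]
        apply lintegral_congr
        intro p
        congr 1
        show (MeasurableEquiv.piFinSuccAbove (fun _ : Fin (n + 2) => E)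
          (Fin.last (n + 1))).symm p = Fin.snoc p.2 p.1
        simp [MeasurableEquiv.piFinSuccAbove, Fin.insertNth_last, Fin.snocEquiv]
      have hcast : ∀ t : ℕ, t ≤ n → ((t : Fin (n + 2))) = Fin.castSucc ((t : Fin (n + 1))) := by
        intro t ht
        ext
        simp only [Fin.coe_castSucc, Fin.val_natCast]
        rw [Nat.mod_eq_of_lt (by omega), Nat.mod_eq_of_lt (by omega)]
      have hlast : ((n + 1 : ℕ) : Fin (n + 2)) = Fin.last (n + 1) := Fin.natCast_eq_last (n + 1)
      have hsnoc : ∀ (x' : Fin (n + 1) → E) (y : E),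
          F (Fin.snoc x' y) =
            (u₀ (x' 0) * ∏ t ∈ Finset.Icc 1 n, u t (x' ↑(t - 1), x' ↑t)) *
              (u (n + 1) (x' (Fin.last n), y) * b (n + 1) y) := by
        intro x' y
        rw [hF]
        simp only
        rw [Finset.prod_Icc_succ_top (Nat.le_add_left 1 n)]
        have h0 : (Fin.snoc x' y : Fin (n + 2) → E) 0 = x' 0 := by
          rw [show (0 : Fin (n + 2)) = Fin.castSucc 0 from rfl, Fin.snoc_castSucc]
        have hlastval : (Fin.snoc x' y : Fin (n + 2) → E) (Fin.last (n + 1)) = y :=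
          Fin.snoc_last _ _
        have hmid : ∀ t : ℕ, t ≤ n → (Fin.snoc x' y : Fin (n + 2) → E) ↑t = x' ↑t := by
          intro t ht
          rw [hcast t ht, Fin.snoc_castSucc]
        have hprod : ∏ t ∈ Finset.Icc 1 n,
            u t ((Fin.snoc x' y : Fin (n + 2) → E) ↑(t - 1),
              (Fin.snoc x' y : Fin (n + 2) → E) ↑t)
            = ∏ t ∈ Finset.Icc 1 n, u t (x' ↑(t - 1), x' ↑t) := by
          apply Finset.prod_congr rfl
          intro t ht
          rw [Finset.mem_Icc] at ht
          rw [hmid (t - 1) (by omega), hmid t ht.2]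
        rw [h0, hlastval, hprod]
        rw [show ((n + 1 - 1 : ℕ) : Fin (n + 2)) = (↑(n : ℕ) : Fin (n + 2)) by norm_num,
          hmid n le_rfl, hlast, hlastval,
          show ((n : ℕ) : Fin (n + 1)) = Fin.last n from Fin.natCast_eq_last n]
        ring
      have hintm : AEMeasurable (fun p : E × (Fin (n + 1) → E) => F (Fin.snoc p.2 p.1))
          (μ.prod (Measure.pi fun _ : Fin (n + 1) => μ)) := by
        apply Measurable.aemeasurable
        apply hFm.comp
        apply measurable_pi_lambda
        intro i
        induction i using Fin.lastCases with
        | last => simpa [Fin.snoc_last] using measurable_fst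
        | cast j => simpa [Fin.snoc_castSucc, Function.comp_def] using (measurable_pi_apply j).comp measurable_snd
      have step2 : (∫⁻ p : E × (Fin (n + 1) → E), F (Fin.snoc p.2 p.1)
            ∂(μ.prod (Measure.pi fun _ : Fin (n + 1) => μ)))
          = ∫⁻ x' : Fin (n + 1) → E,
              (u₀ (x' 0) * ∏ t ∈ Finset.Icc 1 n, u t (x' ↑(t - 1), x' ↑t)) *
                b n (x' (Fin.last n))
              ∂(Measure.pi fun _ : Fin (n + 1) => μ) := by
        rw [lintegral_prod_symm _ hintm]
        apply lintegral_congr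
        intro x'
        have hst : (fun y => u (n + 1) (x' (Fin.last n), y) * b (n + 1) y) =
            fun y => b (n + 1) y * u (n + 1) (x' (Fin.last n), y) := by
          funext y; ring
        calc (∫⁻ y, F (Fin.snoc x' y) ∂μ)
            = ∫⁻ y, (u₀ (x' 0) * ∏ t ∈ Finset.Icc 1 n, u t (x' ↑(t - 1), x' ↑t)) *
                (u (n + 1) (x' (Fin.last n), y) * b (n + 1) y) ∂μ := by
              apply lintegral_congr; intro y; exact hsnoc x' y
          _ = (u₀ (x' 0) * ∏ t ∈ Finset.Icc 1 n, u t (x' ↑(t - 1), x' ↑t)) *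
                ∫⁻ y, u (n + 1) (x' (Fin.last n), y) * b (n + 1) y ∂μ := by
              apply lintegral_const_mul
              exact ((hu (n + 1)).comp (measurable_prodMk_left)).mul (hbm (n + 1) hn)
          _ = (u₀ (x' 0) * ∏ t ∈ Finset.Icc 1 n, u t (x' ↑(t - 1), x' ↑t)) *
                b n (x' (Fin.last n)) := by
              congr 1
              rw [hst]
              exact (hbrec (n + 1) (Nat.le_add_left 1 n) hn (x' (Fin.last n))).symm
      rw [show (∫⁻ x : Fin (n + 2) → E,
            (u₀ (x 0) * ∏ t ∈ Finset.Icc 1 (n + 1), u t (x ↑(t - 1), x ↑t)) *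
              b (n + 1) (x (Fin.last (n + 1))) ∂(Measure.pi fun _ : Fin (n + 2) => μ))
          = ∫⁻ x : Fin (n + 2) → E, F x ∂(Measure.pi fun _ : Fin (n + 2) => μ) from rfl,
        step1, step2]
      exact ih hnT
  refine ⟨?_, ?_, ?_⟩
  · have := key T le_rfl
    rw [← this]
    apply lintegral_congr
    intro x
    rw [hbT, mul_one]
  · intro x hx
    have htel := telescope_aux (fun t => b t (x ↑t)) (fun t => u t (x ↑(t - 1), x ↑t)) T hx
    simp only [Nat.cast_zero] at htel
    rw [hbT] at htel
    rw [mul_comm (b 0 (x 0)) (u₀ (x 0)), mul_assoc, htel, one_mul]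
  · intro t ht1 ht2 x hpos hfin
    simp only [div_eq_mul_inv]
    rw [lintegral_mul_const' _ _ (ENNReal.inv_ne_top.2 hpos.ne'), ← hbrec t ht1 ht2 x,
      ENNReal.mul_inv_cancel hpos.ne' hfin.ne]
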